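/- Let s > 0, let p ≥ 1 be a natural number, and let Q : ℝ → ℝ be integrable and square-integrable with ∫_ℝ (2π|ξ|)^s |Q̂(ξ)| dξ < ∞ and with Q^{p+2} integrable, satisfying pointwise the equation (|∂ₓ|^s Q)(x) + Q(x) − Q(x)^{p+1} = 0. Then ∫_ℝ Q(x)^{p+2} dx = ∫_ℝ Q(x)² dx + ∫_ℝ (2π|ξ|)^s |Q̂(ξ)|² dξ. -/

import Mathlib

open MeasureTheory Real

/-- The Fourier transform `f̂(ξ) = ∫ f(x) e^{−2πixξ} dx`. -/
noncomputable def fourierT (f : ℝ → ℂ) (ξ : ℝ) : ℂ :=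
  ∫ x : ℝ, f x * Complex.exp (-(2 * (π : ℂ) * Complex.I * (x : ℂ) * (ξ : ℂ)))

/-- The fractional derivative `(|∂ₓ|^s f)(x) = ∫ (2π|ξ|)^s f̂(ξ) e^{2πixξ} dξ`. -/
noncomputable def fracDeriv (s : ℝ) (f : ℝ → ℂ) (x : ℝ) : ℂ :=
  ∫ ξ : ℝ, (((2 * π * |ξ|) ^ s : ℝ) : ℂ) * fourierT f ξ
      * Complex.exp (2 * (π : ℂ) * Complex.I * (x : ℂ) * (ξ : ℂ))

open scoped FourierTransform in
lemma fourierT_eq (f : ℝ → ℂ) : fourierT f = 𝓕 f := by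
  funext ξ
  rw [Real.fourier_real_eq_integral_exp_smul]
  unfold fourierT
  congr 1; funext x
  rw [smul_eq_mul, mul_comm]
  congr 1
  push_cast
  ring_nf

open scoped FourierTransform in
lemma fourierT_continuous {f : ℝ → ℂ} (hf : Integrable f) : Continuous (fourierT f) := by
  rw [fourierT_eq]
  refine VectorFourier.fourierIntegral_continuous Real.continuous_fourierChar ?_ hf
  simp only [LinearMap.neg_apply, innerₗ_apply_apply, RCLike.inner_apply, starRingEnd_apply,
    star_trivial]
  fun_prop

lemma norm_exp_mul_I (t : ℝ) : ‖Complex.exp ((t : ℂ) * Complex.I)‖ = 1 := by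
  rw [Complex.norm_exp]
  simp

theorem ground_state_pairing
    (s : ℝ) (hs : 0 < s) (p : ℕ) (hp : 1 ≤ p) (Q : ℝ → ℝ)
    (hQ1 : Integrable Q) (hQ2 : MemLp Q 2 (volume : Measure ℝ))
    (hQhat : Integrable (fun ξ : ℝ =>
      (2 * π * |ξ|) ^ s * ‖fourierT (fun x : ℝ => (Q x : ℂ)) ξ‖))
    (hQp2 : Integrable (fun x : ℝ => Q x ^ (p + 2)))
    (hgs : ∀ x : ℝ,
      fracDeriv s (fun y : ℝ => (Q y : ℂ)) x + (Q x : ℂ) - (Q x : ℂ) ^ (p + 1) = 0) :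
    (∫ x : ℝ, Q x ^ (p + 2))
      = (∫ x : ℝ, Q x ^ 2)
        + ∫ ξ : ℝ, (2 * π * |ξ|) ^ s * ‖fourierT (fun x : ℝ => (Q x : ℂ)) ξ‖ ^ 2 := by
  set F : ℝ → ℂ := fun x => (Q x : ℂ) with hF
  set G : ℝ → ℂ := fourierT F with hG
  set m : ℝ → ℝ := fun ξ => (2 * π * |ξ|) ^ s with hm
  have hm0 : ∀ ξ, 0 ≤ m ξ := fun ξ =>
    Real.rpow_nonneg (by positivity) s
  have hFint : Integrable F := hQ1.ofReal
  have hmc : Continuous m := by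
    have h1 : Continuous fun x : ℝ => x ^ s := Real.continuous_rpow_const hs.le
    exact h1.comp (by fun_prop)
  have hGcont : Continuous G := fourierT_continuous hFint
  -- the integrand on the product space
  set Φ : ℝ × ℝ → ℂ := fun z =>
    F z.1 * (((m z.2 : ℝ) : ℂ) * G z.2
      * Complex.exp (2 * (π : ℂ) * Complex.I * (z.1 : ℂ) * (z.2 : ℂ))) with hΦ
  have hΦint : Integrable Φ (volume.prod volume) := by
    have h1 : Integrable (fun z : ℝ × ℝ => ‖Q z.1‖ * (m z.2 * ‖G z.2‖))
        (volume.prod volume) := hQ1.norm.mul_prod hQhat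
    refine h1.mono' ?_ ?_
    · apply AEStronglyMeasurable.mul
      · exact hFint.aestronglyMeasurable.comp_fst
      apply AEStronglyMeasurable.mul
      · refine AEStronglyMeasurable.comp_snd (f := fun ξ : ℝ => ((m ξ : ℝ) : ℂ) * G ξ) ?_
        refine AEStronglyMeasurable.mul ?_ hGcont.aestronglyMeasurable
        exact (Complex.continuous_ofReal.comp hmc).aestronglyMeasurable
      · apply Continuous.aestronglyMeasurable
        exact Complex.continuous_exp.comp (by fun_prop)
    · filter_upwards with z
      have he : ‖Complex.exp (2 * (π : ℂ) * Complex.I * (z.1 : ℂ) * (z.2 : ℂ))‖ = 1 := by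
        rw [show (2 * (π : ℂ) * Complex.I * (z.1 : ℂ) * (z.2 : ℂ))
            = ((2 * π * z.1 * z.2 : ℝ) : ℂ) * Complex.I by push_cast; ring]
        exact norm_exp_mul_I _
      refine le_of_eq ?_
      simp only [hΦ, hF, norm_mul, he, mul_one, Complex.norm_real, Real.norm_eq_abs,
        abs_of_nonneg (hm0 z.2)]
  -- conjugation identity
  have hconj : ∀ ξ : ℝ,
      (∫ x : ℝ, F x * Complex.exp (2 * (π : ℂ) * Complex.I * (x : ℂ) * (ξ : ℂ)))
        = (starRingEnd ℂ) (G ξ) := by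
    intro ξ
    rw [hG]
    show _ = (starRingEnd ℂ) (fourierT F ξ)
    rw [fourierT, ← integral_conj]
    congr 1; funext x
    rw [map_mul]
    congr 1
    · simp [hF, Complex.conj_ofReal]
    · rw [← Complex.exp_conj]
      congr 1
      simp only [map_neg, map_mul, Complex.conj_I, Complex.conj_ofReal, map_ofNat]
      ring
  -- key identity via Fubini
  have key : (∫ x : ℝ, F x * fracDeriv s F x)
      = ((∫ ξ : ℝ, m ξ * ‖G ξ‖ ^ 2 : ℝ) : ℂ) := by
    have h1 : ∀ x : ℝ, F x * fracDeriv s F x = ∫ ξ : ℝ, Φ (x, ξ) := by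
      intro x
      rw [fracDeriv, ← integral_const_mul]
    calc (∫ x : ℝ, F x * fracDeriv s F x)
        = ∫ x : ℝ, ∫ ξ : ℝ, Φ (x, ξ) := by simp_rw [h1]
      _ = ∫ ξ : ℝ, ∫ x : ℝ, Φ (x, ξ) := integral_integral_swap hΦint
      _ = ∫ ξ : ℝ, ((m ξ * ‖G ξ‖ ^ 2 : ℝ) : ℂ) := by
          congr 1; funext ξ
          have : (∫ x : ℝ, Φ (x, ξ))
              = ((m ξ : ℝ) : ℂ) * G ξ
                * ∫ x : ℝ, F x * Complex.exp (2 * (π : ℂ) * Complex.I * (x : ℂ) * (ξ : ℂ)) := by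
            rw [← integral_const_mul]
            congr 1; funext x
            simp only [hΦ]; ring
          rw [this, hconj ξ, mul_assoc, Complex.mul_conj']
          push_cast
          ring
      _ = ((∫ ξ : ℝ, m ξ * ‖G ξ‖ ^ 2 : ℝ) : ℂ) :=
          integral_ofReal (𝕜 := ℂ) (f := fun ξ : ℝ => m ξ * ‖G ξ‖ ^ 2)
  -- the ground state equation rewrites the pairing
  have hfd : ∀ x : ℝ, fracDeriv s F x = F x ^ (p + 1) - F x := by
    intro x
    have := hgs x
    rw [hF]
    linear_combination this
  have h2 : (∫ x : ℝ, F x * fracDeriv s F x)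
      = (((∫ x : ℝ, Q x ^ (p + 2)) - ∫ x : ℝ, Q x ^ 2 : ℝ) : ℂ) := by
    have hpt : ∀ x : ℝ, F x * fracDeriv s F x = ((Q x ^ (p + 2) - Q x ^ 2 : ℝ) : ℂ) := by
      intro x
      rw [hfd x, hF]
      push_cast
      ring
    rw [integral_congr_ae (Filter.Eventually.of_forall hpt),
      show (∫ x : ℝ, (((fun y : ℝ => Q y ^ (p + 2) - Q y ^ 2) x : ℝ) : ℂ))
        = ((∫ x : ℝ, (Q x ^ (p + 2) - Q x ^ 2) : ℝ) : ℂ) from integral_ofReal,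
      integral_sub hQp2 hQ2.integrable_sq]
  have hreal : (∫ x : ℝ, Q x ^ (p + 2)) - (∫ x : ℝ, Q x ^ 2)
      = ∫ ξ : ℝ, m ξ * ‖G ξ‖ ^ 2 := by
    have := h2.symm.trans key
    exact_mod_cast this
  linarith [hreal]
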